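/- arXiv:1405.1643 — 4 statements merged into one kernel-verified Lean document; each statement's English description precedes it below -/
import Mathlib

section
/- Let Δ = {z ∈ ℂ : |z| < 1} and let σ : Δ → Δ be an anti-holomorphic involution, i.e. σ ∘ σ = id and the map z ↦ σ(conj(z)) is holomorphic on Δ. Then the fixed-point set {z ∈ Δ : σ(z) = z} is nonempty, connected, and has no isolated points. -/
open Metric Set Filter

open Complex
open scoped Topology

local notation "conj'" => starRingEnd ℂ

private lemma hasDerivAt_conj_conj {f : ℂ → ℂ} {z d : ℂ}
    (h : HasDerivAt f d (conj' z)) :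
    HasDerivAt (fun w => conj' (f (conj' w))) (conj' d) z := by
  rw [hasDerivAt_iff_tendsto] at h ⊢
  have hc : Tendsto (fun w : ℂ => conj' w) (𝓝 z) (𝓝 (conj' z)) :=
    (Complex.continuous_conj).tendsto z
  refine (h.comp hc).congr fun w => ?_
  have hnc : ∀ u : ℂ, ‖conj' u‖ = ‖u‖ := fun u => by
    simp [Complex.norm_conj]
  have e1 : ‖conj' w - conj' z‖ = ‖w - z‖ := by rw [← map_sub]; exact hnc _
  have e2 : ‖f (conj' w) - f (conj' z) - (conj' w - conj' z) • d‖
      = ‖conj' (f (conj' w)) - conj' (f (conj' z)) - (w - z) • conj' d‖ := by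
    rw [show conj' (f (conj' w)) - conj' (f (conj' z)) - (w - z) • conj' d
        = conj' (f (conj' w) - f (conj' z) - (conj' w - conj' z) • d) by
      simp only [map_sub, smul_eq_mul, map_mul, Complex.conj_conj], hnc]
  show ‖conj' w - conj' z‖⁻¹ * ‖f (conj' w) - f (conj' z) - (conj' w - conj' z) • d‖
      = ‖w - z‖⁻¹ * ‖conj' (f (conj' w)) - conj' (f (conj' z)) - (w - z) • conj' d‖
  rw [e1, e2]

private noncomputable def mob (a z : ℂ) : ℂ := (z - a) / (1 - conj' a * z)

private lemma mob_denom_ne {a z : ℂ} (ha : ‖a‖ < 1) (hz : ‖z‖ < 1) :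
    1 - conj' a * z ≠ 0 := by
  intro h
  have : ‖conj' a * z‖ < 1 := by
    rw [norm_mul, Complex.norm_conj]
    nlinarith [norm_nonneg a, norm_nonneg z]
  rw [sub_eq_zero] at h
  rw [← h] at this
  simp at this

private lemma normSq_key (a z : ℂ) :
    Complex.normSq (1 - conj' a * z) - Complex.normSq (z - a)
      = (1 - Complex.normSq a) * (1 - Complex.normSq z) := by
  simp only [Complex.normSq_apply, Complex.sub_re, Complex.sub_im, Complex.one_re,
    Complex.one_im, Complex.mul_re, Complex.mul_im, Complex.conj_re, Complex.conj_im]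
  ring

private lemma mob_mem {a z : ℂ} (ha : ‖a‖ < 1) (hz : ‖z‖ < 1) :
    ‖mob a z‖ < 1 := by
  have hne := mob_denom_ne ha hz
  have hd : 0 < ‖1 - conj' a * z‖ := by
    simpa [norm_pos_iff] using hne
  rw [mob, norm_div, div_lt_one hd]
  have h1 : Complex.normSq (z - a) < Complex.normSq (1 - conj' a * z) := by
    have := normSq_key a z
    have ha' : Complex.normSq a < 1 := by
      rw [← Complex.sq_norm]; nlinarith [norm_nonneg a]
    have hz' : Complex.normSq z < 1 := by
      rw [← Complex.sq_norm]; nlinarith [norm_nonneg z]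
    nlinarith
  rw [← Complex.sq_norm, ← Complex.sq_norm] at h1
  exact lt_of_pow_lt_pow_left₀ 2 (norm_nonneg _) h1

private lemma mob_mob {a z : ℂ} (ha : ‖a‖ < 1) (hz : ‖z‖ < 1) :
    mob a (mob (-a) z) = z := by
  have ha' : ‖-a‖ < 1 := by simpa using ha
  have hd1 : (1 : ℂ) + conj' a * z ≠ 0 := by
    have := mob_denom_ne ha' hz
    simpa [map_neg, sub_neg_eq_add] using this
  have hq : (z + a) / (1 + conj' a * z) * (1 + conj' a * z) = z + a :=
    div_mul_cancel₀ _ hd1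
  have hd2 : 1 - conj' a * mob (-a) z ≠ 0 := mob_denom_ne ha (mob_mem ha' hz)
  have hmob : mob (-a) z = (z + a) / (1 + conj' a * z) := by
    simp [mob, map_neg, sub_neg_eq_add]
  rw [hmob] at hd2
  rw [mob, hmob, div_eq_iff hd2]
  linear_combination hq

private lemma quad_char {t : ℝ} (ht : |t| < 1) (x u : ℝ) :
    (x^2 + u^2 < 1 ∧ 2*u = t*(1+x^2+u^2)) ↔
    (x^2 < 1 - t^2 ∧ u = t*(1+x^2)/(1 + Real.sqrt (1 - t^2*(1+x^2)))) := by
  have ht2 : t^2 < 1 := by nlinarith [abs_nonneg t, _root_.sq_abs t]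
  constructor
  · rintro ⟨h1, h2⟩
    have h2sq : t^2*(1+x^2+u^2)^2 = 4*u^2 := by
      linear_combination (-(t*(1+x^2+u^2)) - 2*u) * h2
    have hx2 : x^2 < 1 - t^2 := by
      nlinarith [mul_pos (by nlinarith : (0:ℝ) < 2 - (1+x^2+u^2))
        (by nlinarith [sq_nonneg t, sq_nonneg x, sq_nonneg u] :
          (0:ℝ) < 4 - t^2*(2+(1+x^2+u^2)))]
    have htu : t*u < 1 := by nlinarith [sq_nonneg u, sq_nonneg x]
    have hD : 1 - t^2*(1+x^2) = (1 - t*u)^2 := by nlinarith [h2]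
    have hsq : Real.sqrt (1 - t^2*(1+x^2)) = 1 - t*u := by
      rw [hD]; exact Real.sqrt_sq (by linarith)
    refine ⟨hx2, ?_⟩
    rw [hsq, eq_div_iff (by nlinarith : (1:ℝ) + (1 - t*u) ≠ 0)]
    nlinarith [h2]
  · rintro ⟨hx, hu⟩
    have hD0 : 0 < 1 - t^2*(1+x^2) := by nlinarith [sq_nonneg t, sq_nonneg (1 - t^2)]
    set s := Real.sqrt (1 - t^2*(1+x^2)) with hs_def
    have hs0 : 0 ≤ s := Real.sqrt_nonneg _
    have hs2 : s^2 = 1 - t^2*(1+x^2) := Real.sq_sqrt hD0.le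
    have hs1 : s ≤ 1 := by
      rw [show (1:ℝ) = Real.sqrt 1 by simp [Real.sqrt_one], hs_def]
      exact Real.sqrt_le_sqrt (by nlinarith [sq_nonneg t, sq_nonneg x])
    have hden : (0:ℝ) < 1 + s := by linarith
    have hu' : u * (1 + s) = t*(1+x^2) := by
      rw [hu]; field_simp
    have htu : t * u = 1 - s :=
      mul_left_cancel₀ (ne_of_gt hden)
        (show (1 + s) * (t * u) = (1 + s) * (1 - s) by linear_combination t*hu' + hs2)
    have hu2 : u^2 * (1 + s) = (1 - s) * (1 + x^2) :=
      mul_left_cancel₀ (ne_of_gt hden)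
        (show (1 + s) * (u^2 * (1 + s)) = (1 + s) * ((1 - s) * (1 + x^2)) by
          linear_combination (u*(1+s) + t*(1+x^2)) * hu' + (1+x^2)*hs2)
    have hxs : x^2 < s := by
      have h4 : s^2 > x^4 := by nlinarith [sq_nonneg x]
      nlinarith [sq_nonneg (s - x^2)]
    constructor
    · nlinarith [hu2]
    · linear_combination hu' - u * htu

private lemma mob_diff {a : ℂ} (ha : ‖a‖ < 1) :
    DifferentiableOn ℂ (mob a) (ball 0 1) := by
  apply DifferentiableOn.div
  · exact (differentiable_id.sub_const a).differentiableOn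
  · exact ((differentiable_const (1:ℂ)).sub (differentiable_id.const_mul _)).differentiableOn
  · intro z hz
    rw [mem_ball_zero_iff] at hz
    exact mob_denom_ne ha hz

set_option maxHeartbeats 3200000 in
/-- The fixed-point set of an anti-holomorphic involution of the open unit
disk `Δ ⊂ ℂ` is nonempty, connected, and has no isolated points. -/
theorem fixedPointSet_of_antiholomorphic_involution
    (σ : ℂ → ℂ)
    (hmaps : Set.MapsTo σ (Metric.ball 0 1) (Metric.ball 0 1))
    (hinv : ∀ z ∈ Metric.ball (0 : ℂ) 1, σ (σ z) = z)
    (hanti : DifferentiableOn ℂ (fun z => σ ((starRingEnd ℂ) z)) (Metric.ball 0 1))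
    (F : Set ℂ) (hF : F = {z ∈ Metric.ball (0 : ℂ) 1 | σ z = z}) :
    F.Nonempty ∧ IsConnected F ∧ ∀ z ∈ F, AccPt z (Filter.principal F) := by
  have hmem_iff : ∀ w : ℂ, w ∈ ball (0:ℂ) 1 ↔ ‖w‖ < 1 := fun w => by
    rw [mem_ball_zero_iff]
  have h0mem : (0:ℂ) ∈ ball (0:ℂ) 1 := mem_ball_self one_pos
  have hconj_mem : ∀ z : ℂ, z ∈ ball (0:ℂ) 1 → conj' z ∈ ball (0:ℂ) 1 := by
    intro z hz
    rw [hmem_iff] at hz ⊢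
    rwa [Complex.norm_conj]
  set g : ℂ → ℂ := fun z => σ (conj' z) with hg_def
  set gh : ℂ → ℂ := fun z => conj' (g (conj' z)) with hgh_def
  have hgh_σ : ∀ z : ℂ, gh z = conj' (σ z) := fun z => by
    rw [hgh_def, hg_def]; simp
  have hg_maps : Set.MapsTo g (ball 0 1) (ball 0 1) := fun z hz => hmaps (hconj_mem z hz)
  have hgh_maps : Set.MapsTo gh (ball 0 1) (ball 0 1) := fun z hz => by
    rw [hgh_σ]; exact hconj_mem _ (hmaps hz)
  have hgh_diff : DifferentiableOn ℂ gh (ball 0 1) := by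
    intro z hz
    have hd : DifferentiableAt ℂ g (conj' z) :=
      hanti.differentiableAt (isOpen_ball.mem_nhds (hconj_mem z hz))
    exact (hasDerivAt_conj_conj hd.hasDerivAt).differentiableAt.differentiableWithinAt
  have hghg : ∀ z ∈ ball (0:ℂ) 1, gh (g z) = z := by
    intro z hz
    rw [hgh_σ, hg_def]
    simp only
    rw [show σ (σ (conj' z)) = conj' z from hinv _ (hconj_mem z hz)]
    simp
  have hggh : ∀ z ∈ ball (0:ℂ) 1, g (gh z) = z := by
    intro z hz
    rw [hgh_σ, hg_def]
    simp only [Complex.conj_conj]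
    exact hinv z hz
  -- the automorphism fixing 0
  set a : ℂ := gh 0 with ha_def
  have haball : a ∈ ball (0:ℂ) 1 := hgh_maps h0mem
  have ha : ‖a‖ < 1 := (hmem_iff a).mp haball
  have ha' : ‖-a‖ < 1 := by rwa [norm_neg]
  have hmobneg_maps : Set.MapsTo (mob (-a)) (ball 0 1) (ball 0 1) := fun z hz => by
    rw [hmem_iff] at hz ⊢
    exact mob_mem ha' hz
  have hmob_maps : Set.MapsTo (mob a) (ball 0 1) (ball 0 1) := fun z hz => by
    rw [hmem_iff] at hz ⊢
    exact mob_mem ha hz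
  set G : ℂ → ℂ := fun w => g (mob (-a) w) with hG_def
  set Gh : ℂ → ℂ := fun w => mob a (gh w) with hGh_def
  have hG_diff : DifferentiableOn ℂ G (ball 0 1) :=
    hanti.comp (mob_diff ha') hmobneg_maps
  have hGh_diff : DifferentiableOn ℂ Gh (ball 0 1) :=
    (mob_diff ha).comp hgh_diff hgh_maps
  have hmobneg0 : mob (-a) 0 = a := by simp [mob]
  have hG0 : G 0 = 0 := by rw [hG_def]; simp only [hmobneg0]; exact hggh 0 h0mem
  have hG_maps : Set.MapsTo G (ball 0 1) (ball 0 1) := fun z hz =>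
    hg_maps (hmobneg_maps hz)
  have hGh_maps : Set.MapsTo Gh (ball 0 1) (ball 0 1) := fun z hz =>
    hmob_maps (hgh_maps hz)
  have hGhG : ∀ w ∈ ball (0:ℂ) 1, Gh (G w) = w := by
    intro w hw
    rw [hGh_def, hG_def]
    simp only
    rw [hghg _ (hmobneg_maps hw)]
    rw [hmem_iff] at hw
    exact mob_mob ha hw
  -- Schwarz
  have hG_maps' : Set.MapsTo G (ball 0 1) (ball (G 0) 1) := by rw [hG0]; exact hG_maps
  have hGd1 : ‖dslope G 0 0‖ ≤ 1 := by
    have := Complex.norm_dslope_le_div_of_mapsTo_ball hG_diff (hG_maps'.mono_right ball_subset_closedBall) h0mem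
    simpa using this
  have hGh0 : Gh 0 = 0 := by
    rw [hGh_def]
    simp only [← ha_def, mob]
    simp
  have hGh_maps' : Set.MapsTo Gh (ball 0 1) (ball (Gh 0) 1) := by rw [hGh0]; exact hGh_maps
  have hGhd1 : ‖dslope Gh 0 0‖ ≤ 1 := by
    have := Complex.norm_dslope_le_div_of_mapsTo_ball hGh_diff (hGh_maps'.mono_right ball_subset_closedBall) h0mem
    simpa using this
  have hGat : DifferentiableAt ℂ G 0 := hG_diff.differentiableAt (isOpen_ball.mem_nhds h0mem)
  have hGhat : DifferentiableAt ℂ Gh 0 := hGh_diff.differentiableAt (isOpen_ball.mem_nhds h0mem)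
  have hprod : deriv Gh 0 * deriv G 0 = 1 := by
    have hev : (Gh ∘ G) =ᶠ[nhds 0] id := by
      filter_upwards [isOpen_ball.mem_nhds h0mem] with w hw using hGhG w hw
    have h1 : deriv (Gh ∘ G) 0 = deriv Gh (G 0) * deriv G 0 :=
      deriv_comp 0 (by rwa [hG0] : DifferentiableAt ℂ Gh (G 0)) hGat
    have h2 : deriv (Gh ∘ G) 0 = 1 := by rw [hev.deriv_eq]; exact deriv_id 0
    rw [hG0] at h1
    exact h1.symm.trans h2
  set η : ℂ := deriv G 0 with hη_def
  have hη_abs : ‖η‖ = 1 := by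
    have h1 : ‖η‖ ≤ 1 := by
      rw [dslope_same] at hGd1; exact hGd1
    have h2 : ‖deriv Gh 0‖ ≤ 1 := by
      rw [dslope_same] at hGhd1; exact hGhd1
    have h3 : ‖deriv Gh 0‖ * ‖η‖ = 1 := by
      rw [← norm_mul, hprod, norm_one]
    nlinarith [norm_nonneg η, norm_nonneg (deriv Gh 0)]
  have hη0 : η ≠ 0 := by
    intro h
    rw [h] at hη_abs
    simp at hη_abs
  have heqd : ‖dslope G 0 0‖ = 1 / 1 := by
    rw [dslope_same, ← hη_def, hη_abs]; norm_num
  have hGaffine := Complex.affine_of_mapsTo_ball_of_exists_norm_dslope_eq_div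
    hG_diff (hG_maps'.mono_right ball_subset_closedBall) h0mem heqd
  have hG_eq : ∀ w ∈ ball (0:ℂ) 1, G w = η * w := by
    intro w hw
    have := hGaffine hw
    rw [this]
    simp [hG0, dslope_same, smul_eq_mul, mul_comm, ← hη_def]
  have hg_eq : ∀ z : ℂ, ‖z‖ < 1 → g z = η * mob a z := by
    intro z hz
    have h1 : mob (-a) (mob (-(-a)) z) = z := mob_mob ha' hz
    rw [neg_neg] at h1
    have h2 : G (mob a z) = η * mob a z := hG_eq _ ((hmem_iff _).mpr (mob_mem ha hz))
    rw [hG_def] at h2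
    simp only at h2
    rwa [h1] at h2
  have hσ_eq : ∀ z : ℂ, ‖z‖ < 1 →
      σ z = η * ((conj' z - a) / (1 - conj' a * conj' z)) := by
    intro z hz
    have h1 : σ z = g (conj' z) := by rw [hg_def]; simp
    rw [h1, hg_eq (conj' z) (by rwa [Complex.norm_conj]), mob]
  -- involution constraint
  have hσ0 : σ 0 = -(η * a) := by
    rw [hσ_eq 0 (by simp)]
    simp
  have hconj_a : conj' a = -(η * a) := by
    have h1 : σ (σ 0) = 0 := hinv 0 h0mem
    have h2 : ‖-(η * a)‖ < 1 := by
      rw [norm_neg, norm_mul, hη_abs, one_mul]; exact ha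
    rw [hσ0, hσ_eq _ h2] at h1
    have h3 : conj' (-(η * a)) - a = 0 := by
      rcases mul_eq_zero.mp h1 with h | h
      · exact absurd h hη0
      · rcases div_eq_zero_iff.mp h with h' | h'
        · exact h'
        · exact absurd h' (mob_denom_ne ha (by rwa [Complex.norm_conj]))
    have h4 : conj' (-(η * a)) = a := by linear_combination h3
    calc conj' a = conj' (conj' (-(η * a))) := by rw [h4]
    _ = -(η * a) := Complex.conj_conj _
  -- square root of η
  obtain ⟨μ, hμ2⟩ := IsAlgClosed.exists_pow_nat_eq η (show 0 < 2 by norm_num)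
  have hμabs : ‖μ‖ = 1 := by
    have : ‖μ‖ ^ 2 = 1 := by rw [← norm_pow, hμ2, hη_abs]
    nlinarith [norm_nonneg μ]
  have hμν : μ * conj' μ = 1 := by
    rw [Complex.mul_conj, ← Complex.sq_norm, hμabs]
    norm_num
  have hμ0 : μ ≠ 0 := by
    intro h; rw [h] at hμabs; simp at hμabs
  set t : ℝ := (conj' μ * conj' a).im with ht_def
  have hb : conj' (conj' μ * conj' a) = -(conj' μ * conj' a) := by
    have hc : conj' a = -(μ^2 * a) := by rw [hconj_a, hμ2]
    simp only [map_mul, Complex.conj_conj]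
    linear_combination conj' μ * hc - (μ * a) * hμν
  have hbt : conj' μ * conj' a = (t:ℂ) * Complex.I := by
    have hre : (conj' μ * conj' a).re = 0 := by
      have := congrArg Complex.re hb
      simp only [Complex.conj_re, Complex.neg_re] at this
      linarith
    apply Complex.ext <;> simp [hre, ht_def]
  have ht_abs : |t| < 1 := by
    have h1 : ‖conj' μ * conj' a‖ = ‖a‖ := by
      rw [norm_mul, Complex.norm_conj, Complex.norm_conj, hμabs, one_mul]
    rw [hbt] at h1
    rw [norm_mul, Complex.norm_I, Complex.norm_real, Real.norm_eq_abs, mul_one] at h1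
    rwa [h1]
  have hconja : conj' a = (t:ℂ) * Complex.I * μ := by
    linear_combination μ * hbt - conj' a * hμν
  have ha_eq : a = -((t:ℂ) * Complex.I * conj' μ) := by
    have := congrArg conj' hconja
    simpa [map_mul, Complex.conj_ofReal, Complex.conj_I, Complex.conj_conj, neg_mul,
      mul_neg] using this
  -- main pointwise characterization
  have hmain : ∀ z : ℂ, ‖z‖ < 1 →
      (σ z = z ↔ 2*(conj' μ * z).im
        = t*(1+(conj' μ * z).re^2+(conj' μ * z).im^2)) := by
    intro z hz
    set w : ℂ := conj' μ * z with hw_def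
    set x : ℝ := w.re with hx_def
    set u : ℝ := w.im with hu_def
    have hzw : z = μ * w := by rw [hw_def, ← mul_assoc, hμν, one_mul]
    have hwx : w = (x:ℂ) + (u:ℂ) * Complex.I := (Complex.re_add_im w).symm
    have hwc : conj' w = (x:ℂ) - (u:ℂ) * Complex.I := by
      apply Complex.ext <;> simp [hx_def, hu_def]
    have hdenne : 1 - conj' a * conj' z ≠ 0 :=
      mob_denom_ne ha (by rwa [Complex.norm_conj])
    have key : η * (conj' z - a) - z * (1 - conj' a * conj' z)
        = μ * Complex.I * (((t*(1+x^2+u^2) - 2*u : ℝ)) : ℂ) := by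
      have hcz : conj' z = conj' μ * conj' w := by rw [hzw, map_mul]
      rw [← hμ2, hconja, ha_eq, hcz, hzw, hwc, hwx]
      push_cast
      linear_combination (μ*((x:ℂ) - u*Complex.I) + (t:ℂ)*Complex.I*μ
          + (t:ℂ)*Complex.I*μ*((x:ℂ)^2 - (u:ℂ)^2*Complex.I^2)) * hμν
        + (-((t:ℂ)*Complex.I*μ*(u:ℂ)^2)) * Complex.I_sq
    constructor
    · intro h
      have h1 : η * (conj' z - a) = z * (1 - conj' a * conj' z) := by
        rw [hσ_eq z hz] at h
        rw [mul_div_assoc'] at h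
        rw [div_eq_iff hdenne] at h
        exact h
      have h2 : μ * Complex.I * (((t*(1+x^2+u^2) - 2*u : ℝ)) : ℂ) = 0 := by
        rw [← key, h1, sub_self]
      have h3 : ((t*(1+x^2+u^2) - 2*u : ℝ) : ℂ) = 0 := by
        rcases mul_eq_zero.mp h2 with h' | h'
        · exact absurd h' (mul_ne_zero hμ0 Complex.I_ne_zero)
        · exact h'
      have h4 : t*(1+x^2+u^2) - 2*u = 0 := by exact_mod_cast h3
      linarith
    · intro h
      have h3 : ((t*(1+x^2+u^2) - 2*u : ℝ) : ℂ) = 0 := by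
        rw [show t*(1+x^2+u^2) - 2*u = 0 by linarith]
        simp
      have h1 : η * (conj' z - a) = z * (1 - conj' a * conj' z) := by
        have := key
        rw [h3, mul_zero] at this
        linear_combination this
      rw [hσ_eq z hz, mul_div_assoc', div_eq_iff hdenne]
      exact h1
  -- the fixed-point curve
  have ht2 : t^2 < 1 := by nlinarith [abs_nonneg t, _root_.sq_abs t]
  set r : ℝ := Real.sqrt (1 - t^2) with hr_def
  have hr2 : r^2 = 1 - t^2 := Real.sq_sqrt (by linarith)
  have hr0 : 0 < r := Real.sqrt_pos.mpr (by linarith)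
  set y : ℝ → ℝ := fun x => t*(1+x^2)/(1 + Real.sqrt (1 - t^2*(1+x^2))) with hy_def
  set φ : ℝ → ℂ := fun x => μ * ((x:ℂ) + ((y x : ℝ):ℂ) * Complex.I) with hφ_def
  have hxIoo : ∀ x : ℝ, x ∈ Ioo (-r) r ↔ x^2 < 1 - t^2 := by
    intro x
    constructor
    · rintro ⟨h1, h2⟩; nlinarith
    · intro h
      exact ⟨by nlinarith [sq_nonneg (x + r)], by nlinarith [sq_nonneg (x - r)]⟩
  have hφw : ∀ x : ℝ, conj' μ * φ x = (x:ℂ) + ((y x : ℝ):ℂ) * Complex.I := by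
    intro x
    rw [hφ_def]
    simp only
    rw [← mul_assoc, mul_comm (conj' μ) μ, hμν, one_mul]
  have hφre : ∀ x : ℝ, (conj' μ * φ x).re = x := fun x => by rw [hφw x]; simp
  have hφim : ∀ x : ℝ, (conj' μ * φ x).im = y x := fun x => by rw [hφw x]; simp
  have hnsμ : Complex.normSq (conj' μ) = 1 := by
    rw [Complex.normSq_conj, ← Complex.sq_norm, hμabs]; norm_num
  have hFeq : F = φ '' Ioo (-r) r := by
    rw [hF]
    ext z
    simp only [mem_setOf_eq, mem_image]
    constructor
    · rintro ⟨hzball, hσz⟩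
      have hz : ‖z‖ < 1 := (hmem_iff z).mp hzball
      set w : ℂ := conj' μ * z with hw_def
      set x : ℝ := w.re with hx_def
      set u : ℝ := w.im with hu_def
      have h2 : 2*u = t*(1+x^2+u^2) := (hmain z hz).mp hσz
      have h1 : x^2 + u^2 < 1 := by
        have hns : Complex.normSq w = Complex.normSq (conj' μ) * Complex.normSq z :=
          map_mul _ _ _
        have hnz : Complex.normSq z < 1 := by
          rw [← Complex.sq_norm]; nlinarith [norm_nonneg z]
        have hw1 : Complex.normSq w < 1 := by rw [hns, hnsμ, one_mul]; exact hnz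
        have happ : Complex.normSq w = x*x + u*u := Complex.normSq_apply w
        nlinarith
      obtain ⟨hx2, hu2⟩ := (quad_char ht_abs x u).mp ⟨h1, h2⟩
      refine ⟨x, (hxIoo x).mpr hx2, ?_⟩
      have hyx : y x = u := by rw [hy_def]; exact hu2.symm
      rw [hφ_def]
      simp only
      rw [hyx]
      rw [show (x:ℂ) + (u:ℂ) * Complex.I = w from Complex.re_add_im w]
      rw [hw_def, ← mul_assoc, hμν, one_mul]
    · rintro ⟨x, hxmem, rfl⟩
      have hx2 := (hxIoo x).mp hxmem
      have hqc := (quad_char ht_abs x (y x)).mpr ⟨hx2, by rw [hy_def]⟩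
      have hzball : φ x ∈ ball (0:ℂ) 1 := by
        rw [hmem_iff]
        have hφx : φ x = μ * ((x:ℂ) + ((y x : ℝ):ℂ) * Complex.I) := by rw [hφ_def]
        have hns : Complex.normSq (φ x) = Complex.normSq μ *
            Complex.normSq ((x:ℂ) + ((y x : ℝ):ℂ) * Complex.I) := by
          rw [hφx]; exact map_mul _ _ _
        have hnsμ' : Complex.normSq μ = 1 := by
          rw [← Complex.sq_norm, hμabs]; norm_num
        have hns2 : Complex.normSq ((x:ℂ) + ((y x : ℝ):ℂ) * Complex.I) = x^2 + (y x)^2 := by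
          rw [Complex.normSq_apply]
          simp
          ring
        have : Complex.normSq (φ x) < 1 := by
          rw [hns, hnsμ', one_mul, hns2]; exact hqc.1
        nlinarith [norm_nonneg (φ x), Complex.sq_norm (φ x)]
      refine ⟨hzball, ?_⟩
      apply (hmain (φ x) ((hmem_iff _).mp hzball)).mpr
      rw [hφre x, hφim x]
      exact hqc.2
  -- continuity of the parametrization
  have hy_cont : Continuous y := by
    rw [hy_def]
    apply Continuous.div
    · exact (continuous_const.mul ((continuous_const).add (continuous_pow 2)))
    · exact continuous_const.add (Real.continuous_sqrt.comp
        (continuous_const.sub (continuous_const.mul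
          (continuous_const.add (continuous_pow 2)))))
    · intro x
      positivity
  have hφ_cont : Continuous φ := by
    rw [hφ_def]
    exact continuous_const.mul (Complex.continuous_ofReal.add
      ((Complex.continuous_ofReal.comp hy_cont).mul continuous_const))
  have hφ_inj : ∀ x1 x2 : ℝ, φ x1 = φ x2 → x1 = x2 := by
    intro x1 x2 h
    have := congrArg (fun zz => (conj' μ * zz).re) h
    simpa [hφre x1, hφre x2] using this
  refine ⟨?_, ?_, ?_⟩
  · rw [hFeq]
    exact ⟨φ 0, mem_image_of_mem φ ⟨by linarith, hr0⟩⟩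
  · rw [hFeq]
    exact (isConnected_Ioo (by linarith : -r < r)).image φ hφ_cont.continuousOn
  · intro z hz
    rw [hFeq] at hz
    obtain ⟨x₀, hx₀, rfl⟩ := hz
    rw [accPt_iff_nhds]
    intro U hU
    have hUx : {x : ℝ | φ x ∈ U} ∈ nhds x₀ := hφ_cont.continuousAt.preimage_mem_nhds hU
    have hIoo : Ioo (-r) r ∈ nhds x₀ := Ioo_mem_nhds hx₀.1 hx₀.2
    have hS : {x : ℝ | φ x ∈ U} ∩ Ioo (-r) r ∈ nhdsWithin x₀ {x₀}ᶜ :=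
      mem_nhdsWithin_of_mem_nhds (Filter.inter_mem hUx hIoo)
    obtain ⟨x, hx⟩ := Filter.nonempty_of_mem (Filter.inter_mem hS self_mem_nhdsWithin)
    refine ⟨φ x, ⟨hx.1.1, ?_⟩, ?_⟩
    · rw [hFeq]
      exact mem_image_of_mem φ hx.1.2
    · intro heq
      exact hx.2 (hφ_inj x x₀ heq)
end

section
/- Under these hypotheses, every descending gradient curve of G along which G tends to 0 lands at a single point of E: if γ : [0, T) → Ω \ E is a maximal solution of the gradient-descent equation γ'(t) = −∇G(γ(t)) such that the infimum of G(γ(t)) over t ∈ [0, T) equals 0, then the limit of γ(t) as t → T exists and is a point of E. -/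
open Metric Set Complex Filter

/-- A real-valued function is harmonic on an open subset of `ℂ ≅ ℝ²` if it is
C² there and its Laplacian vanishes. -/
def IsHarmonicOn (G : ℂ → ℝ) (U : Set ℂ) : Prop :=
  ContDiffOn ℝ 2 G U ∧ ∀ z ∈ U,
    fderiv ℝ (fun w => fderiv ℝ G w 1) z 1 +
      fderiv ℝ (fun w => fderiv ℝ G w Complex.I) z Complex.I = 0

/-- **Landing of external rays (Theorem 7.2 (iii), analytic core).** Every
maximal descending gradient curve of the Green-type function `G` along which
`inf G = 0` lands at a single point of `E`. -/
theorem gradient_curve_lands_at_point_of_E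
    (Ω : Set ℂ) (hΩopen : IsOpen Ω) (hΩbdd : Bornology.IsBounded Ω)
    (hΩsc : SimplyConnectedSpace Ω)
    (hΩconj : (fun z => (starRingEnd ℂ) z) '' Ω = Ω)
    (E : Set ℂ) (hEne : E.Nonempty) (hEcpt : IsCompact E)
    (hEsub : E ⊆ Ω) (hEreal : ∀ z ∈ E, z.im = 0)
    (G : ℂ → ℝ) (hGcont : ContinuousOn G (closure Ω))
    (hGbdry : ∀ z ∈ frontier Ω, G z = 1)
    (hGzero : ∀ z ∈ E, G z = 0)
    (hGharm : IsHarmonicOn G (Ω \ E))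
    (T : ℝ) (hT : 0 < T) (γ : ℝ → ℂ)
    (hγmem : ∀ t ∈ Set.Ico (0 : ℝ) T, γ t ∈ Ω \ E)
    (hγode : ∀ t ∈ Set.Ico (0 : ℝ) T, HasDerivAt γ (-(gradient G (γ t))) t)
    (hinf : sInf ((fun t => G (γ t)) '' Set.Ico (0 : ℝ) T) = 0)
    (hmax : ∀ (T' : ℝ) (γ' : ℝ → ℂ), T < T' →
      (∀ t ∈ Set.Ico (0 : ℝ) T, γ' t = γ t) →
      (∀ t ∈ Set.Ico (0 : ℝ) T', γ' t ∈ Ω \ E ∧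
        HasDerivAt γ' (-(gradient G (γ' t))) t) → False) :
    ∃ p ∈ E, Filter.Tendsto γ (nhdsWithin T (Set.Iio T)) (nhds p) := by
  classical
  set g : ℝ → ℝ := fun t => G (γ t) with hg_def
  have hUopen : IsOpen (Ω \ E) := hΩopen.sdiff hEcpt.isClosed
  have hG2 : ∀ z ∈ Ω \ E, ContDiffAt ℝ 2 G z := fun z hz =>
    hGharm.1.contDiffAt (hUopen.mem_nhds hz)
  have hGdiff : ∀ z ∈ Ω \ E, DifferentiableAt ℝ G z := fun z hz =>
    (hG2 z hz).differentiableAt two_ne_zero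
  -- derivative of g
  have hgderiv : ∀ t ∈ Set.Ico (0 : ℝ) T,
      HasDerivAt g (-(‖gradient G (γ t)‖ ^ 2)) t := by
    intro t ht
    have hz := hγmem t ht
    have hF : HasFDerivAt G
        (InnerProductSpace.toDual ℝ ℂ (gradient G (γ t))) (γ t) :=
      ((hGdiff _ hz).hasGradientAt).hasFDerivAt
    have h := hF.comp_hasDerivAt t (hγode t ht)
    exact h.congr_deriv (by rw [InnerProductSpace.toDual_apply_apply, inner_neg_right,
      real_inner_self_eq_norm_sq])
  have hγcont : ∀ t ∈ Set.Ico (0 : ℝ) T, ContinuousAt γ t :=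
    fun t ht => (hγode t ht).continuousAt
  have hgcont : ∀ t ∈ Set.Ico (0 : ℝ) T, ContinuousAt g t :=
    fun t ht => (hgderiv t ht).continuousAt
  -- g is antitone on [0, T)
  have hganti : AntitoneOn g (Set.Ico 0 T) := by
    refine antitoneOn_of_deriv_nonpos (convex_Ico 0 T)
      (fun t ht => (hgcont t ht).continuousWithinAt) ?_ ?_
    · intro t ht
      rw [interior_Ico] at ht
      exact (hgderiv t ⟨ht.1.le, ht.2⟩).differentiableAt.differentiableWithinAt
    · intro t ht
      rw [interior_Ico] at ht
      rw [(hgderiv t ⟨ht.1.le, ht.2⟩).deriv]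
      exact neg_nonpos.mpr (by positivity)
  -- image is nonempty and bounded below, g ≥ 0
  have himage_ne : ((fun t => G (γ t)) '' Set.Ico (0 : ℝ) T).Nonempty :=
    ⟨G (γ 0), mem_image_of_mem _ (left_mem_Ico.2 hT)⟩
  have hbdd : BddBelow ((fun t => G (γ t)) '' Set.Ico (0 : ℝ) T) := by
    have hcpt : IsCompact (closure Ω) := hΩbdd.isCompact_closure
    have himg : IsCompact (G '' closure Ω) := hcpt.image_of_continuousOn hGcont
    refine himg.bddBelow.mono ?_
    rintro y ⟨t, ht, rfl⟩
    exact ⟨γ t, subset_closure (hγmem t ht).1, rfl⟩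
  have hg_nonneg : ∀ t ∈ Set.Ico (0 : ℝ) T, 0 ≤ g t := by
    intro t ht
    have h := csInf_le hbdd (mem_image_of_mem _ ht)
    rw [hinf] at h
    exact h
  have hg_small : ∀ ε > (0 : ℝ), ∃ t₀ ∈ Set.Ico (0 : ℝ) T, g t₀ < ε := by
    intro ε hε
    by_contra h
    push_neg at h
    have hle : ε ≤ sInf ((fun t => G (γ t)) '' Set.Ico (0 : ℝ) T) := by
      refine le_csInf himage_ne ?_
      rintro y ⟨t, ht, rfl⟩
      exact h t ht
    rw [hinf] at hle
    linarith
  -- key Cauchy estimate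
  have key : ∀ t s : ℝ, 0 ≤ t → t ≤ s → s < T →
      ‖γ s - γ t‖ ≤ (s - t) / 2 + (g t - g s) / 2 := by
    intro t s ht0 hts hsT
    have hsub : Set.Icc t s ⊆ Set.Ico 0 T := fun u hu =>
      ⟨ht0.trans hu.1, lt_of_le_of_lt hu.2 hsT⟩
    have hB' : ∀ u ∈ Set.Ico t s,
        HasDerivWithinAt (fun u => (u - t) / 2 + (g t - g u) / 2)
        (1 / 2 + ‖gradient G (γ u)‖ ^ 2 / 2) (Set.Ici u) u := by
      intro u hu
      have hu' : u ∈ Set.Ico 0 T := hsub ⟨hu.1, hu.2.le⟩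
      have h1 : HasDerivAt (fun u => (u - t) / 2 + (g t - g u) / 2)
          (1 / 2 + ‖gradient G (γ u)‖ ^ 2 / 2) u := by
        have h2 := (((hasDerivAt_id u).sub_const t).div_const 2).add
          (((hasDerivAt_const u (g t)).sub (hgderiv u hu')).div_const 2)
        exact h2.congr_deriv (by ring)
      exact h1.hasDerivWithinAt
    have hf' : ∀ u ∈ Set.Ico t s, HasDerivWithinAt (fun u => γ u - γ t)
        (-(gradient G (γ u))) (Set.Ici u) u := fun u hu =>
      ((hγode u (hsub ⟨hu.1, hu.2.le⟩)).sub_const (γ t)).hasDerivWithinAt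
    have hfc : ContinuousOn (fun u => γ u - γ t) (Set.Icc t s) := fun u hu =>
      ((hγcont u (hsub hu)).continuousWithinAt).sub continuousWithinAt_const
    have hBc : ContinuousOn (fun u => (u - t) / 2 + (g t - g u) / 2)
        (Set.Icc t s) := by
      intro u hu
      have hu' := hsub hu
      exact (((continuousAt_id.sub continuousAt_const).div_const 2).add
        ((continuousAt_const.sub (hgcont u hu')).div_const 2)).continuousWithinAt
    have hbound : ∀ u ∈ Set.Ico t s,
        ‖-(gradient G (γ u))‖ ≤ 1 / 2 + ‖gradient G (γ u)‖ ^ 2 / 2 := by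
      intro u hu
      rw [norm_neg]
      nlinarith [sq_nonneg (‖gradient G (γ u)‖ - 1)]
    have ha : ‖(fun u => γ u - γ t) t‖ ≤ (fun u => (u - t) / 2 + (g t - g u) / 2) t := by
      simp
    have hfin := image_norm_le_of_norm_deriv_right_le_deriv_boundary'
      hfc hf' ha hBc hB' hbound (right_mem_Icc.2 hts)
    simpa using hfin
  -- γ is Cauchy along 𝓝[<] T
  have hcauchy : Cauchy (Filter.map γ (nhdsWithin T (Set.Iio T))) := by
    rw [Metric.cauchy_iff]
    refine ⟨Filter.map_neBot, ?_⟩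
    intro ε hε
    obtain ⟨t₀, ht₀, hgt₀⟩ := hg_small (ε / 4) (by linarith)
    set t₁ := max t₀ (T - ε / 4) with ht₁_def
    have ht₁T : t₁ < T := max_lt ht₀.2 (by linarith)
    have ht₁0 : 0 ≤ t₁ := le_max_of_le_left ht₀.1
    refine ⟨γ '' Set.Ioo t₁ T, Filter.image_mem_map
      (Ioo_mem_nhdsLT_of_mem ⟨ht₁T, le_refl T⟩), ?_⟩
    have main : ∀ a b : ℝ, a ∈ Set.Ioo t₁ T → b ∈ Set.Ioo t₁ T → a ≤ b →
        dist (γ a) (γ b) < ε := by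
      intro a b hA hB hab
      have hA' : a ∈ Set.Ico 0 T := ⟨ht₁0.trans hA.1.le, hA.2⟩
      have h1 : ‖γ b - γ a‖ ≤ (b - a) / 2 + (g a - g b) / 2 :=
        key a b hA'.1 hab hB.2
      have hga : g a < ε / 4 := by
        have h2 : g a ≤ g t₀ := hganti ht₀ hA' (le_trans (le_max_left _ _) hA.1.le)
        linarith
      have hgb : 0 ≤ g b := hg_nonneg b ⟨ht₁0.trans hB.1.le, hB.2⟩
      have hba : b - a < ε / 4 := by
        have h3 : T - ε / 4 ≤ t₁ := le_max_right _ _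
        have h4 := hA.1
        have h5 := hB.2
        linarith
      rw [dist_eq_norm, norm_sub_rev]
      linarith
    rintro x ⟨a, hA, rfl⟩ y ⟨b, hB, rfl⟩
    rcases le_total a b with h | h
    · exact main a b hA hB h
    · rw [dist_comm]; exact main b a hB hA h
  obtain ⟨q, hq⟩ := CompleteSpace.complete hcauchy
  have hqt : Filter.Tendsto γ (nhdsWithin T (Set.Iio T)) (nhds q) := hq
  have hev : ∀ᶠ t in nhdsWithin T (Set.Iio T), t ∈ Set.Ico (0 : ℝ) T := by
    filter_upwards [Ioo_mem_nhdsLT_of_mem (⟨hT, le_refl T⟩ : T ∈ Set.Ioc 0 T)]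
      with t ht
    exact ⟨ht.1.le, ht.2⟩
  have hγΩ : ∀ᶠ t in nhdsWithin T (Set.Iio T), γ t ∈ Ω :=
    hev.mono fun t ht => (hγmem t ht).1
  have hqclos : q ∈ closure Ω :=
    mem_closure_of_tendsto hqt hγΩ
  have hgq : Filter.Tendsto g (nhdsWithin T (Set.Iio T)) (nhds (G q)) := by
    have h1 : Filter.Tendsto γ (nhdsWithin T (Set.Iio T))
        (nhdsWithin q (closure Ω)) :=
      tendsto_nhdsWithin_iff.2 ⟨hqt, hγΩ.mono fun t ht => subset_closure ht⟩
    exact (hGcont q hqclos).tendsto.comp h1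
  have hGq0 : G q = 0 := by
    have h1 : 0 ≤ G q :=
      ge_of_tendsto hgq (hev.mono fun t ht => hg_nonneg t ht)
    have h2 : ∀ t ∈ Set.Ico (0 : ℝ) T, G q ≤ g t := by
      intro t ht
      refine le_of_tendsto hgq ?_
      filter_upwards [hev,
        Ioo_mem_nhdsLT_of_mem (⟨ht.2, le_refl T⟩ : T ∈ Set.Ioc t T)]
        with s hs hst
      exact hganti ht hs hst.1.le
    have h3 : G q ≤ 0 := by
      rw [← hinf]
      refine le_csInf himage_ne ?_
      rintro y ⟨t, ht, rfl⟩
      exact h2 t ht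
    linarith
  have hqΩ : q ∈ Ω := by
    by_contra h
    have hfr : q ∈ frontier Ω := by
      rw [frontier_eq_closure_inter_closure]
      refine ⟨hqclos, ?_⟩
      have : q ∈ (Ωᶜ : Set ℂ) := h
      exact subset_closure this
    have := hGbdry q hfr
    rw [hGq0] at this
    norm_num at this
  by_cases hqE : q ∈ E
  · exact ⟨q, hqE, hqt⟩
  exfalso
  have hqU : q ∈ Ω \ E := ⟨hqΩ, hqE⟩
  -- the vector field is C¹ at q
  have hvC1 : ContDiffAt ℝ 1 (fun z => -(gradient G z)) q := by
    have h2 : ContDiffAt ℝ 2 G q := hG2 q hqU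
    have hf1 : ContDiffAt ℝ 1 (fderiv ℝ G) q := h2.fderiv_right (by norm_num)
    have hsymm : ContDiff ℝ 1
        ((InnerProductSpace.toDual ℝ ℂ).symm : (ℂ →L[ℝ] ℝ) → ℂ) :=
      (InnerProductSpace.toDual ℝ ℂ).symm.contDiff
    have hcomp : ContDiffAt ℝ 1
        (fun z => (InnerProductSpace.toDual ℝ ℂ).symm (fderiv ℝ G z)) q :=
      hsymm.contDiffAt.comp q hf1
    exact hcomp.neg
  -- local solution through (T, q)
  obtain ⟨f, hfT, ε, hε, hfode⟩ :=
    hvC1.exists_forall_mem_closedBall_exists_eq_forall_mem_Ioo_hasDerivAt₀ T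
  have hfcont : ContinuousAt f T :=
    (hfode T ⟨by linarith, by linarith⟩).continuousAt
  have hfmem : ∀ᶠ t in nhds T, f t ∈ Ω \ E := by
    have hmem : Ω \ E ∈ nhds (f T) := hUopen.mem_nhds (by rw [hfT]; exact hqU)
    exact hfcont.eventually_mem hmem
  obtain ⟨δ, hδ, hδmem⟩ := Metric.eventually_nhds_iff.1 hfmem
  set η := min ε δ with hη_def
  have hηpos : 0 < η := lt_min hε hδ
  have hηε : η ≤ ε := min_le_left _ _
  have hηδ : η ≤ δ := min_le_right _ _
  set Γ : ℝ → ℂ := fun t => if t < T then γ t else f t with hΓ_def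
  have hΓT : Γ T = q := by simp [hΓ_def, hfT]
  refine hmax (T + η / 2) Γ (by linarith) (fun t ht => if_pos ht.2) ?_
  intro t ht
  rcases lt_trichotomy t T with hlt | heq | hgt
  · constructor
    · simpa [hΓ_def, if_pos hlt] using hγmem t ⟨ht.1, hlt⟩
    · have hEq : Γ =ᶠ[nhds t] γ :=
        Filter.eventuallyEq_of_mem (Iio_mem_nhds hlt) (fun s hs => if_pos hs)
      have hD : HasDerivAt Γ (-(gradient G (γ t))) t :=
        (hγode t ⟨ht.1, hlt⟩).congr_of_eventuallyEq hEq
      have hval : Γ t = γ t := if_pos hlt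
      rw [hval]
      exact hD
  · subst heq
    refine ⟨hΓT ▸ hqU, ?_⟩
    rw [hΓT]
    -- right-hand derivative from f
    have hR : HasDerivWithinAt Γ (-(gradient G q)) (Set.Ici t) t := by
      have h0 : HasDerivAt f (-(gradient G (f t))) t :=
        hfode t ⟨by linarith, by linarith⟩
      rw [hfT] at h0
      exact (h0.hasDerivWithinAt).congr
        (fun s hs => if_neg (not_lt.2 hs)) (if_neg (lt_irrefl t))
    -- left-hand derivative from the slope estimate
    have hL : HasDerivWithinAt Γ (-(gradient G q)) (Set.Iic t) t := by
      rw [hasDerivWithinAt_iff_tendsto_slope, Set.Iic_diff_right]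
      rw [Metric.tendsto_nhds]
      intro ε' hε'
      have hvq : ContinuousAt (fun z => -(gradient G z)) q := hvC1.continuousAt
      have htail : ∀ᶠ s in nhdsWithin t (Set.Iio t),
          (‖-(gradient G (γ s)) - -(gradient G q)‖ < ε' / 2 ∧ s ∈ Set.Ico 0 t) := by
        have h1 : Filter.Tendsto (fun s => -(gradient G (γ s)))
            (nhdsWithin t (Set.Iio t)) (nhds (-(gradient G q))) :=
          hvq.tendsto.comp hqt
        have h2 := h1 (Metric.ball_mem_nhds _ (by linarith : (0:ℝ) < ε' / 2))
        filter_upwards [h2, hev] with s hs1 hs2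
        refine ⟨?_, hs2⟩
        rw [← dist_eq_norm]
        exact hs1
      obtain ⟨a, haT, hasub⟩ :=
        mem_nhdsLT_iff_exists_Ioo_subset.1 htail
      have claim : ∀ u ∈ Set.Ioo a t,
          ‖γ u - q - (u - t) • (-(gradient G q))‖ ≤ ε' / 2 * (t - u) := by
        intro u hu
        have hstep : ∀ r ∈ Set.Ico u t,
            ‖(γ r - r • (-(gradient G q))) - (γ u - u • (-(gradient G q)))‖
              ≤ ε' / 2 * (r - u) := by
          intro r hr
          have hψ' : ∀ w ∈ Set.Icc u r,
              HasDerivWithinAt (fun s => γ s - s • (-(gradient G q)))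
              (-(gradient G (γ w)) - -(gradient G q)) (Set.Icc u r) w := by
            intro w hw
            have hw' : w ∈ Set.Ioo a t :=
              ⟨lt_of_lt_of_le hu.1 hw.1, lt_of_le_of_lt hw.2 hr.2⟩
            have hw'' : w ∈ Set.Ico 0 t := (hasub hw').2
            have hD := ((hγode w hw'').sub
              ((hasDerivAt_id w).smul_const (-(gradient G q)))).hasDerivWithinAt
              (s := Set.Icc u r)
            exact hD.congr_deriv (by simp)
          have hbd : ∀ w ∈ Set.Ico u r,
              ‖-(gradient G (γ w)) - -(gradient G q)‖ ≤ ε' / 2 := by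
            intro w hw
            have hw' : w ∈ Set.Ioo a t :=
              ⟨lt_of_lt_of_le hu.1 hw.1, lt_trans hw.2 hr.2⟩
            exact ((hasub hw').1).le
          exact norm_image_sub_le_of_norm_deriv_le_segment' hψ' hbd r
            (right_mem_Icc.2 hr.1)
        have hψt : Filter.Tendsto (fun s => γ s - s • (-(gradient G q)))
            (nhdsWithin t (Set.Iio t)) (nhds (q - t • (-(gradient G q)))) := by
          refine hqt.sub ?_
          exact ((continuous_id.smul continuous_const).tendsto t).mono_left
            nhdsWithin_le_nhds
        have h1 : Filter.Tendsto
            (fun r => ‖(γ r - r • (-(gradient G q))) - (γ u - u • (-(gradient G q)))‖)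
            (nhdsWithin t (Set.Iio t))
            (nhds ‖(q - t • (-(gradient G q))) - (γ u - u • (-(gradient G q)))‖) :=
          (hψt.sub tendsto_const_nhds).norm
        have h2 : Filter.Tendsto (fun r => ε' / 2 * (r - u))
            (nhdsWithin t (Set.Iio t)) (nhds (ε' / 2 * (t - u))) :=
          (((tendsto_id.sub tendsto_const_nhds).const_mul _).mono_left
            nhdsWithin_le_nhds)
        have hle : ‖(q - t • (-(gradient G q))) - (γ u - u • (-(gradient G q)))‖
            ≤ ε' / 2 * (t - u) := by
          refine le_of_tendsto_of_tendsto h1 h2 ?_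
          filter_upwards [Ioo_mem_nhdsLT_of_mem
            (⟨hu.2, le_refl t⟩ : t ∈ Set.Ioc u t)] with r hr
          exact hstep r ⟨hr.1.le, hr.2⟩
        have hrw : γ u - q - (u - t) • (-(gradient G q)) =
            -((q - t • (-(gradient G q))) - (γ u - u • (-(gradient G q)))) := by
          module
        rw [hrw, norm_neg]
        exact hle
      filter_upwards [Ioo_mem_nhdsLT_of_mem
        (⟨haT, le_refl t⟩ : t ∈ Set.Ioc a t)] with s hs
      have hsT : s < t := hs.2
      have hne : s - t ≠ 0 := sub_ne_zero.mpr (ne_of_lt hsT)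
      have hpos : (0:ℝ) < t - s := by linarith
      have hslope : slope Γ t s = (s - t)⁻¹ • (γ s - q) := by
        rw [slope, hΓT, vsub_eq_sub]
        congr 1
        simp only [hΓ_def]
        rw [if_pos hsT]
      have hkey2 : slope Γ t s - (-(gradient G q)) =
          (s - t)⁻¹ • (γ s - q - (s - t) • (-(gradient G q))) := by
        rw [hslope]
        match_scalars <;> field_simp
      rw [dist_eq_norm, hkey2, norm_smul]
      have habs : ‖(s - t)⁻¹‖ = (t - s)⁻¹ := by
        rw [norm_inv, Real.norm_eq_abs, abs_sub_comm, abs_of_pos hpos]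
      rw [habs]
      have hb := claim s hs
      calc (t - s)⁻¹ * ‖γ s - q - (s - t) • (-(gradient G q))‖
          ≤ (t - s)⁻¹ * (ε' / 2 * (t - s)) :=
            mul_le_mul_of_nonneg_left hb (by positivity)
        _ = ε' / 2 := by field_simp
        _ < ε' := by linarith
    have hcomb := hL.union hR
    rw [Set.Iic_union_Ici] at hcomb
    exact hasDerivWithinAt_univ.1 hcomb
  · have htmem : t ∈ Set.Ioo (T - ε) (T + ε) := by
      constructor
      · linarith
      · have h1 : t < T + η / 2 := ht.2
        linarith
    have hfm : f t ∈ Ω \ E := by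
      apply hδmem
      rw [Real.dist_eq, abs_of_pos (by linarith : (0:ℝ) < t - T)]
      have h1 : t < T + η / 2 := ht.2
      linarith
    have hval : Γ t = f t := if_neg (not_lt.2 hgt.le)
    constructor
    · rw [hval]; exact hfm
    · have hEq : Γ =ᶠ[nhds t] f :=
        Filter.eventuallyEq_of_mem (Ioi_mem_nhds hgt)
          (fun s hs => if_neg (not_lt.2 (le_of_lt hs)))
      have hD := (hfode t htmem).congr_of_eventuallyEq hEq
      rw [hval]
      exact hD
end

section
/- Let 0 ≤ κ < 1, let u : Δ → Δ be holomorphic, and let v : Δ → {z ∈ ℂ : |z| ≤ κ} be holomorphic. Then there is exactly one pair (z, w) ∈ Δ × Δ with w = u(z) and z = v(w); that is, the horizontal graph {(z, u(z)) : z ∈ Δ} and the vertical graph {(v(w), w) : w ∈ Δ} intersect in exactly one point of the bidisk Δ × Δ. -/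
open Metric Set
open Complex

noncomputable def mb (a z : ℂ) : ℂ := (a - z) / (1 - (starRingEnd ℂ) a * z)

lemma normSq_den (a z : ℂ) :
    normSq (1 - (starRingEnd ℂ) a * z) = normSq (a - z) + (1 - normSq a) * (1 - normSq z) := by
  simp only [normSq_apply, Complex.sub_re, Complex.sub_im, Complex.mul_re, Complex.mul_im,
    Complex.one_re, Complex.one_im, Complex.conj_re, Complex.conj_im]
  ring

lemma den_ne (a z : ℂ) (h : ‖a‖ * ‖z‖ < 1) :
    1 - (starRingEnd ℂ) a * z ≠ 0 := by
  intro hc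
  have h1 : (1 : ℂ) = (starRingEnd ℂ) a * z := by linear_combination hc
  have : ‖(starRingEnd ℂ) a * z‖ = 1 := by rw [← h1]; simp
  rw [norm_mul, Complex.norm_conj] at this
  linarith

lemma mb_invol {a z : ℂ} (ha : ‖a‖ < 1) (hz : ‖z‖ < 1) :
    mb a (mb a z) = z := by
  have h1 : 1 - (starRingEnd ℂ) a * z ≠ 0 := by
    apply den_ne
    nlinarith [norm_nonneg a, norm_nonneg z]
  have h2 : 1 - (starRingEnd ℂ) a * a ≠ 0 := by
    apply den_ne
    nlinarith [norm_nonneg a]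
  have h2' : 1 - a * (starRingEnd ℂ) a ≠ 0 := by rw [mul_comm]; exact h2
  have h1' : 1 - z * (starRingEnd ℂ) a ≠ 0 := by rw [mul_comm]; exact h1
  unfold mb
  field_simp
  have hd : 1 - z * (starRingEnd ℂ) a - (a - z) * (starRingEnd ℂ) a
      = 1 - a * (starRingEnd ℂ) a := by ring
  rw [hd, div_eq_iff h2']
  ring

lemma mb_normSq_eq {a z : ℂ} (h : 1 - (starRingEnd ℂ) a * z ≠ 0) :
    normSq (mb a z) = normSq (a - z) / (normSq (a - z) + (1 - normSq a) * (1 - normSq z)) := by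
  unfold mb
  rw [map_div₀, normSq_den]

lemma abs_lt_of_normSq_lt {w : ℂ} {t : ℝ} (h : normSq w < t) : ‖w‖ < Real.sqrt t := by
  rw [Complex.norm_def]
  exact Real.sqrt_lt_sqrt (normSq_nonneg w) h

lemma mb_lt_one {a z : ℂ} (ha : ‖a‖ < 1) (hz : ‖z‖ < 1) :
    ‖mb a z‖ < 1 := by
  have h : 1 - (starRingEnd ℂ) a * z ≠ 0 := by
    apply den_ne; nlinarith [norm_nonneg a, norm_nonneg z]
  have hP : 0 < (1 - normSq a) * (1 - normSq z) := by
    have h1 : normSq a < 1 := by rw [← Complex.sq_norm]; nlinarith [norm_nonneg a]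
    have h2 : normSq z < 1 := by rw [← Complex.sq_norm]; nlinarith [norm_nonneg z]
    nlinarith
  have hN : 0 ≤ normSq (a - z) := normSq_nonneg _
  have : normSq (mb a z) < 1 := by
    rw [mb_normSq_eq h, div_lt_one (by linarith)]
    linarith
  have := abs_lt_of_normSq_lt this
  simpa using this

lemma mb_le_bound {κ : ℝ} (hκ1 : κ < 1) {a z : ℂ}
    (ha : ‖a‖ ≤ κ) (hz : ‖z‖ ≤ κ) :
    ‖mb a z‖ ≤ Real.sqrt (1 - ((1 - κ^2)/(1 + κ^2))^2) := by
  have hκ0 : 0 ≤ κ := le_trans (norm_nonneg a) ha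
  have h : 1 - (starRingEnd ℂ) a * z ≠ 0 := by
    apply den_ne; nlinarith [norm_nonneg a, norm_nonneg z]
  set s : ℝ := ((1 - κ^2)/(1 + κ^2))^2 with hs_def
  have hden : (0:ℝ) < 1 + κ^2 := by positivity
  have hs : s * (1 + κ^2)^2 = (1 - κ^2)^2 := by
    rw [hs_def]; field_simp
  have hs0 : 0 ≤ s := sq_nonneg _
  set N := normSq (a - z) with hN_def
  set P := (1 - normSq a) * (1 - normSq z) with hP_def
  have hN0 : 0 ≤ N := normSq_nonneg _
  have hsqa : normSq a ≤ κ^2 := by rw [← Complex.sq_norm]; nlinarith [norm_nonneg a]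
  have hsqz : normSq z ≤ κ^2 := by rw [← Complex.sq_norm]; nlinarith [norm_nonneg z]
  have hκ2 : (0:ℝ) < 1 - κ^2 := by nlinarith
  have hP1 : (1 - κ^2)^2 ≤ P := by
    rw [hP_def, pow_two]
    exact mul_le_mul (by linarith) (by linarith) (by linarith) (by linarith)
  have hDle : N + P ≤ (1 + κ^2)^2 := by
    have habs : ‖1 - (starRingEnd ℂ) a * z‖ ≤ 1 + κ^2 := by
      calc ‖1 - (starRingEnd ℂ) a * z‖
          ≤ ‖(1:ℂ)‖ + ‖(starRingEnd ℂ) a * z‖ := by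
            exact (norm_sub_le _ _)
        _ ≤ 1 + κ^2 := by
            rw [norm_one, norm_mul, Complex.norm_conj]
            nlinarith [norm_nonneg a, norm_nonneg z]
    have := normSq_den a z
    have h2 : normSq (1 - (starRingEnd ℂ) a * z) ≤ (1 + κ^2)^2 := by
      rw [← Complex.sq_norm]
      nlinarith [norm_nonneg (1 - (starRingEnd ℂ) a * z)]
    linarith [normSq_den a z]
  have hNP : 0 < N + P := by nlinarith [pow_pos hκ2 2]
  have hnormSq : normSq (mb a z) ≤ 1 - s := by
    rw [mb_normSq_eq h, ← hN_def, ← hP_def, div_le_iff₀ hNP]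
    nlinarith [mul_le_mul_of_nonneg_left hDle hs0]
  rw [Complex.norm_def]
  exact Real.sqrt_le_sqrt hnormSq

lemma mb_self (a : ℂ) : mb a a = 0 := by simp [mb]

lemma mb_zero (a : ℂ) : mb a 0 = a := by simp [mb]

lemma mb_diffOn {a : ℂ} (ha : ‖a‖ < 1) :
    DifferentiableOn ℂ (mb a) (ball 0 1) := by
  apply DifferentiableOn.div
  · exact (differentiable_const a).differentiableOn.sub differentiableOn_id
  · exact (differentiable_const 1).differentiableOn.sub
      ((differentiable_const _).differentiableOn.mul differentiableOn_id)
  · intro z hz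
    rw [mem_ball_zero_iff] at hz
    apply den_ne
    nlinarith [norm_nonneg a, norm_nonneg z]

lemma abs_mem_ball {z : ℂ} (h : z ∈ ball (0:ℂ) 1) : ‖z‖ < 1 := by
  rwa [mem_ball_zero_iff] at h

lemma mb_contract {κ : ℝ} (hκ0 : 0 ≤ κ) (hκ1 : κ < 1) {f : ℂ → ℂ}
    (hf : DifferentiableOn ℂ f (ball 0 1)) (hm : MapsTo f (ball 0 1) (closedBall 0 κ))
    {a b : ℂ} (ha : a ∈ ball 0 1) (hb : b ∈ ball 0 1) :
    ‖mb (f a) (f b)‖ ≤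
      (Real.sqrt (1 - ((1 - κ^2)/(1 + κ^2))^2) + 1)/2 * ‖mb a b‖ := by
  set B := Real.sqrt (1 - ((1 - κ^2)/(1 + κ^2))^2) with hB_def
  set L := (B + 1)/2 with hL_def
  have hB0 : 0 ≤ B := Real.sqrt_nonneg _
  have hBlt : B < 1 := by
    have hspos : 0 < (1 - κ^2)/(1 + κ^2) := div_pos (by nlinarith) (by positivity)
    rw [hB_def, Real.sqrt_lt' one_pos]
    nlinarith
  have hBL : B < L := by rw [hL_def]; linarith
  have hL1 : L < 1 := by rw [hL_def]; linarith
  have haa : ‖a‖ < 1 := abs_mem_ball ha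
  have habκ : ∀ x ∈ ball (0:ℂ) 1, ‖f x‖ ≤ κ := by
    intro x hx
    have := hm hx
    rwa [mem_closedBall_zero_iff] at this
  have hfa1 : ‖f a‖ < 1 := lt_of_le_of_lt (habκ a ha) hκ1
  have maps1 : MapsTo (mb a) (ball (0:ℂ) 1) (ball (0:ℂ) 1) := by
    intro z hz
    rw [mem_ball_zero_iff]
    exact mb_lt_one haa (abs_mem_ball hz)
  set g : ℂ → ℂ := fun z => mb (f a) (f (mb a z)) with hg_def
  have hg_diff : DifferentiableOn ℂ g (ball 0 1) := by
    apply DifferentiableOn.comp (mb_diffOn hfa1)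
    · exact DifferentiableOn.comp hf (mb_diffOn haa) maps1
    · intro z hz
      exact closedBall_subset_ball hκ1 (hm (maps1 hz))
  have hg0 : g 0 = 0 := by
    rw [hg_def]; simp only [mb_zero, mb_self]
  have hmapsg : MapsTo g (ball (0:ℂ) 1) (ball (g 0) L) := by
    intro z hz
    rw [hg0, mem_ball_zero_iff]
    calc ‖g z‖ ≤ B :=
          mb_le_bound hκ1 (habκ a ha) (habκ _ (maps1 hz))
      _ < L := hBL
  have hmem : mb a b ∈ ball (0:ℂ) 1 := maps1 hb
  have key := Complex.dist_le_div_mul_dist_of_mapsTo_ball hg_diff (hmapsg.mono_right ball_subset_closedBall) hmem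
  rw [hg0] at key
  have hgab : g (mb a b) = mb (f a) (f b) := by
    rw [hg_def]; simp only [mb_invol haa (abs_mem_ball hb)]
  rw [hgab] at key
  simpa [Complex.dist_eq, Complex.norm_def] using key

lemma dist_le_mb {κ : ℝ} (hκ1 : κ < 1) {a b : ℂ}
    (ha : ‖a‖ ≤ κ) (hb : ‖b‖ ≤ κ) :
    dist a b ≤ (1 + κ^2) * ‖mb a b‖ := by
  have hκ0 : 0 ≤ κ := le_trans (norm_nonneg a) ha
  have hden_ne : 1 - (starRingEnd ℂ) a * b ≠ 0 := by
    apply den_ne; nlinarith [norm_nonneg a, norm_nonneg b]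
  have hD : 0 < ‖1 - (starRingEnd ℂ) a * b‖ :=
    norm_pos_iff.mpr hden_ne
  have hDle : ‖1 - (starRingEnd ℂ) a * b‖ ≤ 1 + κ^2 := by
    calc ‖1 - (starRingEnd ℂ) a * b‖
        ≤ ‖1‖ + ‖(starRingEnd ℂ) a * b‖ := norm_sub_le _ _
      _ ≤ 1 + κ^2 := by
          rw [norm_one, norm_mul, Complex.norm_conj]
          nlinarith [norm_nonneg a, norm_nonneg b]
  rw [Complex.dist_eq]
  unfold mb
  rw [norm_div, ← mul_div_assoc, le_div_iff₀ hD]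
  nlinarith [norm_nonneg (a - b)]

/-- **Degree (1,1) case of Proposition 1.2.** A horizontal graph
`{(z, u(z))}` and a vertical graph `{(v(w), w)}` of holomorphic functions
`u : Δ → Δ` and `v : Δ → {|z| ≤ κ}`, `κ < 1`, intersect in exactly one point
of the bidisk `Δ × Δ`. -/
theorem horizontal_vertical_graphs_intersect_once
    (κ : ℝ) (hκ0 : 0 ≤ κ) (hκ1 : κ < 1) (u v : ℂ → ℂ)
    (hu : DifferentiableOn ℂ u (Metric.ball 0 1))
    (humaps : Set.MapsTo u (Metric.ball 0 1) (Metric.ball 0 1))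
    (hv : DifferentiableOn ℂ v (Metric.ball 0 1))
    (hvmaps : Set.MapsTo v (Metric.ball 0 1) (Metric.closedBall 0 κ)) :
    ∃! p : ℂ × ℂ, p ∈ (Metric.ball (0 : ℂ) 1) ×ˢ (Metric.ball (0 : ℂ) 1) ∧
      p.2 = u p.1 ∧ p.1 = v p.2 := by
  set f : ℂ → ℂ := fun z => v (u z) with hf_def
  have hf : DifferentiableOn ℂ f (ball 0 1) := hv.comp hu humaps
  have hm : MapsTo f (ball 0 1) (closedBall 0 κ) := fun z hz => hvmaps (humaps hz)
  set L : ℝ := (Real.sqrt (1 - ((1 - κ^2)/(1 + κ^2))^2) + 1)/2 with hL_def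
  have hB0 : 0 ≤ Real.sqrt (1 - ((1 - κ^2)/(1 + κ^2))^2) := Real.sqrt_nonneg _
  have hL0 : 0 ≤ L := by rw [hL_def]; linarith
  have hL1 : L < 1 := by
    have hspos : 0 < (1 - κ^2)/(1 + κ^2) := div_pos (by nlinarith) (by positivity)
    have : Real.sqrt (1 - ((1 - κ^2)/(1 + κ^2))^2) < 1 := by
      rw [Real.sqrt_lt' one_pos]; nlinarith
    rw [hL_def]; linarith
  -- the uniqueness of fixed points of f
  have huniq : ∀ x ∈ ball (0:ℂ) 1, ∀ y ∈ ball (0:ℂ) 1, f x = x → f y = y → x = y := by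
    intro x hx y hy hfx hfy
    have h1 := mb_contract hκ0 hκ1 hf hm hx hy
    rw [hfx, hfy] at h1
    have h2 : ‖mb x y‖ = 0 := by
      nlinarith [norm_nonneg (mb x y)]
    have h3 : mb x y = 0 := by
      rwa [norm_eq_zero] at h2
    have hden : 1 - (starRingEnd ℂ) x * y ≠ 0 := by
      apply den_ne
      nlinarith [abs_mem_ball hx, abs_mem_ball hy,
        norm_nonneg x, norm_nonneg y]
    unfold mb at h3
    rcases div_eq_zero_iff.1 h3 with h4 | h4
    · exact sub_eq_zero.1 h4
    · exact absurd h4 hden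
  -- the fixed-point iteration
  set zs : ℕ → ℂ := fun n => f^[n] 0 with hzs_def
  have hstep : ∀ n, zs (n + 1) = f (zs n) := fun n => Function.iterate_succ_apply' f n 0
  have hball : ∀ n, zs n ∈ ball (0:ℂ) 1 := by
    intro n
    induction n with
    | zero => simpa [hzs_def] using mem_ball_self one_pos
    | succ m ih =>
      rw [hstep m]
      exact closedBall_subset_ball hκ1 (hm ih)
  have hcb : ∀ n, ‖zs n‖ ≤ κ := by
    intro n
    cases n with
    | zero => simpa [hzs_def] using hκ0
    | succ m =>
      rw [hstep m]
      have := hm (hball m)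
      rwa [mem_closedBall_zero_iff] at this
  have hgeo : ∀ n, ‖mb (zs (n+1)) (zs n)‖ ≤
      L ^ n * ‖mb (zs 1) (zs 0)‖ := by
    intro n
    induction n with
    | zero => simp
    | succ m ih =>
      have h1 := mb_contract hκ0 hκ1 hf hm (hball (m+1)) (hball m)
      rw [← hstep (m+1), ← hstep m] at h1
      calc ‖mb (zs (m+1+1)) (zs (m+1))‖
          ≤ L * ‖mb (zs (m+1)) (zs m)‖ := h1
        _ ≤ L * (L ^ m * ‖mb (zs 1) (zs 0)‖) :=
            mul_le_mul_of_nonneg_left ih hL0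
        _ = L ^ (m+1) * ‖mb (zs 1) (zs 0)‖ := by ring
  set C : ℝ := (1 + κ^2) * ‖mb (zs 1) (zs 0)‖ with hC_def
  have hdist : ∀ n, dist (zs n) (zs (n+1)) ≤ C * L ^ n := by
    intro n
    calc dist (zs n) (zs (n+1)) = dist (zs (n+1)) (zs n) := dist_comm _ _
      _ ≤ (1 + κ^2) * ‖mb (zs (n+1)) (zs n)‖ :=
          dist_le_mb hκ1 (hcb (n+1)) (hcb n)
      _ ≤ (1 + κ^2) * (L ^ n * ‖mb (zs 1) (zs 0)‖) :=
          mul_le_mul_of_nonneg_left (hgeo n) (by positivity)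
      _ = C * L ^ n := by rw [hC_def]; ring
  have hcauchy : CauchySeq zs := cauchySeq_of_le_geometric L C hL1 hdist
  obtain ⟨p, hp⟩ := cauchySeq_tendsto_of_complete hcauchy
  have hpκ : p ∈ closedBall (0:ℂ) κ := by
    apply isClosed_closedBall.mem_of_tendsto hp
    exact Filter.Eventually.of_forall fun n => by
      rw [mem_closedBall_zero_iff]; exact hcb n
  have hpball : p ∈ ball (0:ℂ) 1 := closedBall_subset_ball hκ1 hpκ
  have hfp : f p = p := by
    have hcont : ContinuousAt f p :=
      hf.continuousOn.continuousAt (isOpen_ball.mem_nhds hpball)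
    have h1 : Filter.Tendsto (fun n => f (zs n)) Filter.atTop (nhds (f p)) :=
      hcont.tendsto.comp hp
    have h2 : Filter.Tendsto (fun n => zs (n+1)) Filter.atTop (nhds p) :=
      hp.comp (Filter.tendsto_add_atTop_nat 1)
    simp only [hstep] at h2
    exact tendsto_nhds_unique h1 h2
  -- assemble
  refine ⟨(p, u p), ⟨⟨hpball, humaps hpball⟩, rfl, ?_⟩, ?_⟩
  · exact hfp.symm
  · rintro ⟨q₁, q₂⟩ ⟨⟨hq₁, hq₂⟩, h2, h3⟩
    simp only at h2 h3 hq₁ hq₂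
    have hfq : f q₁ = q₁ := by show v (u q₁) = q₁; rw [← h2, ← h3]
    have : q₁ = p := huniq q₁ hq₁ p hpball hfq hfp
    subst this
    simp [h2]
end

section
/- R is an equivalence relation on X, and R is a closed subset of X × X in the product topology. -/
open Set

/-- The shift by `n` on the full two-sided 2-shift `{a,b}^ℤ ≅ (ℤ → Bool)`:
`(σⁿ x)(m) = x(m + n)`. -/
def shiftZ (n : ℤ) (x : ℤ → Bool) : ℤ → Bool := fun m => x (m + n)

/-- The sequence `… a b a b a …` written `\overline{a}bab\overline{a}`:
symbol `b` exactly at positions `-1` and `1`. -/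
def xstar : ℤ → Bool := fun n => decide (n = -1 ∨ n = 1)

/-- The sequence `… a b b b a …` written `\overline{a}bbb\overline{a}`:
symbol `b` exactly at positions `-1`, `0` and `1`. -/
def ystar : ℤ → Bool := fun n => decide (n = -1 ∨ n = 0 ∨ n = 1)

/-- The identification `\overline{a}bab\overline{a} ∼ \overline{a}bbb\overline{a}`
together with all its shifts, as a relation on the shift space. -/
def Rrel : Set ((ℤ → Bool) × (ℤ → Bool)) :=
  {p | p.1 = p.2} ∪
    {p | ∃ n : ℤ, p.1 = shiftZ n xstar ∧ p.2 = shiftZ n ystar} ∪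
    {p | ∃ n : ℤ, p.1 = shiftZ n ystar ∧ p.2 = shiftZ n xstar}

lemma shift_key {n m : ℤ} {f g : ℤ → Bool} (h : shiftZ n f = shiftZ m g) :
    ∀ t : ℤ, f t = g (t + (m - n)) := by
  intro t
  have := congrFun h (t - n)
  simpa [shiftZ, sub_add_cancel, sub_add_eq_add_sub, add_sub_assoc] using this

lemma xy_ne (n m : ℤ) : shiftZ n xstar ≠ shiftZ m ystar := by
  intro h
  have k := shift_key h
  have h1 := k (-1)
  have h2 := k 1
  have h3 := k 0
  simp [xstar, ystar, decide_eq_decide] at h1 h2 h3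
  omega

lemma y_inj {n m : ℤ} (h : shiftZ n ystar = shiftZ m ystar) : n = m := by
  have k := shift_key h
  have h1 := k 1
  have h2 := k (-2)
  have h3 := k 2
  simp [ystar, decide_eq_decide] at h1 h2 h3
  omega

lemma x_inj {n m : ℤ} (h : shiftZ n xstar = shiftZ m xstar) : n = m := by
  have k := shift_key h
  have h1 := k 1
  have h2 := k (-1)
  simp [xstar, decide_eq_decide] at h1 h2
  omega

lemma same_off {n k : ℤ} (hk : k ≠ -n) : shiftZ n xstar k = shiftZ n ystar k := by
  simp only [shiftZ, xstar, ystar, decide_eq_decide]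
  omega

lemma mem_diag {u : ℤ → Bool} : (u, u) ∈ Rrel := Or.inl (Or.inl rfl)

/-- If a pair in `Rrel` differs at coordinate `k`, it is one of the two
distinguished pairs shifted by `-k`. -/
lemma Rrel_forced {p q : ℤ → Bool} {k : ℤ} (hpq : (p, q) ∈ Rrel) (hk : p k ≠ q k) :
    (p = shiftZ (-k) xstar ∧ q = shiftZ (-k) ystar) ∨
      (p = shiftZ (-k) ystar ∧ q = shiftZ (-k) xstar) := by
  rcases hpq with (hd | ⟨n, h1, h2⟩) | ⟨n, h1, h2⟩
  · exact absurd (congrFun hd k) hk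
  · dsimp only at h1 h2
    have hkn : k = -n := by
      by_contra hne
      exact hk (by rw [h1, h2]; exact same_off hne)
    left
    rw [hkn, neg_neg]
    exact ⟨h1, h2⟩
  · dsimp only at h1 h2
    have hkn : k = -n := by
      by_contra hne
      exact hk (by rw [h1, h2]; exact (same_off hne).symm)
    right
    rw [hkn, neg_neg]
    exact ⟨h1, h2⟩

lemma isOpen_cyl₁ (k : ℤ) (b : Bool) :
    IsOpen {p : (ℤ → Bool) × (ℤ → Bool) | p.1 k = b} := by
  have : Continuous (fun p : (ℤ → Bool) × (ℤ → Bool) => p.1 k) :=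
    (continuous_apply k).comp continuous_fst
  exact (isOpen_discrete {b}).preimage this

lemma isOpen_cyl₂ (k : ℤ) (b : Bool) :
    IsOpen {p : (ℤ → Bool) × (ℤ → Bool) | p.2 k = b} := by
  have : Continuous (fun p : (ℤ → Bool) × (ℤ → Bool) => p.2 k) :=
    (continuous_apply k).comp continuous_snd
  exact (isOpen_discrete {b}).preimage this

/-- `Rrel` is an equivalence relation on `{a,b}^ℤ` and is closed in the
product topology. -/
theorem Rrel_equivalence_and_closed :
    Equivalence (fun u v : ℤ → Bool => (u, v) ∈ Rrel) ∧ IsClosed Rrel := by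
  constructor
  · constructor
    · intro u; exact mem_diag
    · intro u v h
      rcases h with (hd | ⟨n, h1, h2⟩) | ⟨n, h1, h2⟩
      · exact Or.inl (Or.inl hd.symm)
      · exact Or.inr ⟨n, h2, h1⟩
      · exact Or.inl (Or.inr ⟨n, h2, h1⟩)
    · intro a b c hab hbc
      rcases hab with (hd | ⟨n, h1, h2⟩) | ⟨n, h1, h2⟩
      · rw [show a = b from hd]; exact hbc
      · dsimp only at h1 h2
        rcases hbc with (hd | ⟨m, g1, g2⟩) | ⟨m, g1, g2⟩
        · exact Or.inl (Or.inr ⟨n, h1, (show b = c from hd) ▸ h2⟩)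
        · dsimp only at g1 g2
          exact absurd (g1.symm.trans h2) (xy_ne m n)
        · dsimp only at g1 g2
          have hnm := y_inj (h2.symm.trans g1)
          exact Or.inl (Or.inl (show a = c by rw [h1, g2, hnm]))
      · dsimp only at h1 h2
        rcases hbc with (hd | ⟨m, g1, g2⟩) | ⟨m, g1, g2⟩
        · exact Or.inr ⟨n, h1, (show b = c from hd) ▸ h2⟩
        · dsimp only at g1 g2
          have hnm := x_inj (h2.symm.trans g1)
          exact Or.inl (Or.inl (show a = c by rw [h1, g2, hnm]))
        · dsimp only at g1 g2
          exact absurd (h2.symm.trans g1) (xy_ne n m)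
  · rw [← isOpen_compl_iff, isOpen_iff_mem_nhds]
    rintro ⟨u, v⟩ huv
    have hne : u ≠ v := fun h => huv (Or.inl (Or.inl h))
    obtain ⟨k, hk⟩ := Function.ne_iff.mp hne
    set A : (ℤ → Bool) × (ℤ → Bool) := (shiftZ (-k) xstar, shiftZ (-k) ystar) with hA
    set B : (ℤ → Bool) × (ℤ → Bool) := (shiftZ (-k) ystar, shiftZ (-k) xstar) with hB
    have hUA : (u, v) ≠ A := fun h => huv (Or.inl (Or.inr ⟨-k, congrArg Prod.fst h, congrArg Prod.snd h⟩))
    have hUB : (u, v) ≠ B := fun h => huv (Or.inr ⟨-k, congrArg Prod.fst h, congrArg Prod.snd h⟩)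
    have hW : IsOpen (({p : (ℤ → Bool) × (ℤ → Bool) | p.1 k = u k} ∩
        {p | p.2 k = v k}) ∩ ({A}ᶜ ∩ {B}ᶜ)) := by
      refine IsOpen.inter (IsOpen.inter (isOpen_cyl₁ k (u k)) (isOpen_cyl₂ k (v k)))
        (IsOpen.inter ?_ ?_) <;> exact isClosed_singleton.isOpen_compl
    refine Filter.mem_of_superset (hW.mem_nhds ⟨⟨rfl, rfl⟩, hUA, hUB⟩) ?_
    rintro ⟨p, q⟩ ⟨⟨hp, hq⟩, hnA, hnB⟩ hR
    have hkpq : p k ≠ q k := by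
      simp only [Set.mem_setOf_eq] at hp hq
      rw [hp, hq]; exact hk
    rcases Rrel_forced hR hkpq with ⟨e1, e2⟩ | ⟨e1, e2⟩
    · exact hnA (by simp [hA, Prod.ext_iff, e1, e2])
    · exact hnB (by simp [hB, Prod.ext_iff, e1, e2])
end
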